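/- For the CDPIC(S,K) problem with M messages and C = M clients, if (n−1)·⌊M/(S+n−1)⌋ < K ≤ n·⌊M/(S+n)⌋ for some n ∈ {2,...,M−S}, then transmitting the S+n uncoded messages X_{1+j⌊M/(S+n)⌋} for j = 0,...,S+n−1 guarantees that every client's window of K consecutive messages contains at most n of the transmitted messages, so every client receives at least S new messages. -/

import Mathlib

/-- Client `i` possesses message `x` iff `x` lies in the circular window
`{i, i+1, ..., i+K-1}` of `Z/MZ`. -/
def window (M K : ℕ) (i x : ZMod M) : Prop := (x - i).val < K

lemma key_div_ne (M d : ℕ) [NeZero M] (hd : 0 < d) (c : ℕ) (hc1 : d ≤ c)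
    (hc2 : c + d ≤ M) (a b : ZMod M) (hab : a = b + (c : ℕ)) :
    a.val / d ≠ b.val / d := by
  have hcM : c < M := by omega
  have hval : a.val = (b.val + c) % M := by
    rw [hab, ZMod.val_add, ZMod.val_natCast, Nat.mod_eq_of_lt hcM]
  have hbM : b.val < M := ZMod.val_lt b
  by_cases h : b.val + c < M
  · have ha : a.val = b.val + c := by rw [hval, Nat.mod_eq_of_lt h]
    have h1 : (b.val + d) / d ≤ a.val / d := Nat.div_le_div_right (by omega)
    rw [Nat.add_div_right _ hd] at h1
    omega
  · have ha : a.val = b.val + c - M := by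
      rw [hval, Nat.mod_eq_sub_mod (by omega), Nat.mod_eq_of_lt (by omega)]
    have haM : a.val + d ≤ b.val := by omega
    have h1 : (a.val + d) / d ≤ b.val / d := Nat.div_le_div_right haM
    rw [Nat.add_div_right _ hd] at h1
    omega

open scoped Classical in
/-- CDPIC(S,K) with `C = M` clients: if
`(n-1)⌊M/(S+n-1)⌋ < K ≤ n⌊M/(S+n)⌋` for some `n ∈ {2,…,M-S}`, then among the
`S+n` transmitted messages `X_{1 + j⌊M/(S+n)⌋}` (`j = 0,…,S+n-1`) every
client's window of `K` consecutive messages contains at most `n`, so every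
client receives at least `S` new messages. -/
theorem uncoded_scheme_medium_K (M S K n : ℕ) [NeZero M]
    (hS : 1 ≤ S) (hn2 : 2 ≤ n) (hnM : n ≤ M - S) (hSn : S + n ≤ M)
    (hlow : (n - 1) * (M / (S + n - 1)) < K) (hhigh : K ≤ n * (M / (S + n))) :
    ∀ i : ZMod M,
      (Finset.univ.filter (fun j : Fin (S + n) =>
        window M K i ((1 + (j : ℕ) * (M / (S + n)) : ℕ) : ZMod M))).card ≤ n ∧
      S ≤ (Finset.univ.filter (fun j : Fin (S + n) =>
        ¬ window M K i ((1 + (j : ℕ) * (M / (S + n)) : ℕ) : ZMod M))).card := by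
  intro i
  set d := M / (S + n) with hdd
  have hSn0 : 0 < S + n := by omega
  have hd : 0 < d := Nat.div_pos hSn hSn0
  have hmul' : (S + n) * d ≤ M := by
    have := Nat.div_mul_le_self M (S + n)
    calc (S + n) * d = M / (S + n) * (S + n) := by ring
    _ ≤ M := this
  -- main card bound
  have hcard : (Finset.univ.filter (fun j : Fin (S + n) =>
      window M K i ((1 + (j : ℕ) * d : ℕ) : ZMod M))).card ≤ n := by
    have := Finset.card_le_card_of_injOn
      (s := Finset.univ.filter (fun j : Fin (S + n) =>
        window M K i ((1 + (j : ℕ) * d : ℕ) : ZMod M)))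
      (f := fun j : Fin (S + n) => (((1 + (j : ℕ) * d : ℕ) : ZMod M) - i).val / d)
      (t := Finset.range n) ?_ ?_
    · simpa using this
    · intro j hj
      simp only [Finset.mem_coe, Finset.mem_filter, Finset.mem_univ, true_and] at hj
      have hjK : (((1 + (j : ℕ) * d : ℕ) : ZMod M) - i).val < K := hj
      have : (((1 + (j : ℕ) * d : ℕ) : ZMod M) - i).val < n * d :=
        lt_of_lt_of_le hjK hhigh
      simp only [Finset.mem_coe, Finset.mem_range]
      exact Nat.div_lt_of_lt_mul (Nat.mul_comm n d ▸ this)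
    · intro j1 h1 j2 h2 heq
      by_contra hne
      rcases Nat.lt_or_ge (j1 : ℕ) (j2 : ℕ) with hlt | hge
      · -- j2 > j1
        refine key_div_ne M d hd (((j2 : ℕ) - (j1 : ℕ)) * d) ?_ ?_
          (((1 + (j2 : ℕ) * d : ℕ) : ZMod M) - i)
          (((1 + (j1 : ℕ) * d : ℕ) : ZMod M) - i) ?_ heq.symm
        · nlinarith [Nat.sub_pos_of_lt hlt]
        · have hj2 : (j2 : ℕ) < S + n := j2.isLt
          have : ((j2 : ℕ) - (j1 : ℕ) + 1) * d ≤ (S + n) * d :=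
            Nat.mul_le_mul_right d (by omega)
          nlinarith
        · have : (1 + (j2 : ℕ) * d : ℕ) = (1 + (j1 : ℕ) * d) + ((j2 : ℕ) - (j1 : ℕ)) * d := by
            have : (j1 : ℕ) * d + ((j2 : ℕ) - (j1 : ℕ)) * d = (j2 : ℕ) * d := by
              rw [← Nat.add_mul]; congr 1; omega
            omega
          push_cast [this]
          ring
      · have hlt2 : (j2 : ℕ) < (j1 : ℕ) := by
          rcases Nat.lt_or_ge (j2 : ℕ) (j1 : ℕ) with h | h
          · exact h
          · exact absurd (Fin.ext (by omega)) hne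
        refine key_div_ne M d hd (((j1 : ℕ) - (j2 : ℕ)) * d) ?_ ?_
          (((1 + (j1 : ℕ) * d : ℕ) : ZMod M) - i)
          (((1 + (j2 : ℕ) * d : ℕ) : ZMod M) - i) ?_ heq
        · nlinarith [Nat.sub_pos_of_lt hlt2]
        · have hj1 : (j1 : ℕ) < S + n := j1.isLt
          have : ((j1 : ℕ) - (j2 : ℕ) + 1) * d ≤ (S + n) * d :=
            Nat.mul_le_mul_right d (by omega)
          nlinarith
        · have : (1 + (j1 : ℕ) * d : ℕ) = (1 + (j2 : ℕ) * d) + ((j1 : ℕ) - (j2 : ℕ)) * d := by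
            have : (j2 : ℕ) * d + ((j1 : ℕ) - (j2 : ℕ)) * d = (j1 : ℕ) * d := by
              rw [← Nat.add_mul]; congr 1; omega
            omega
          push_cast [this]
          ring
  refine ⟨hcard, ?_⟩
  have hsplit := Finset.card_filter_add_card_filter_not
    (s := (Finset.univ : Finset (Fin (S + n))))
    (p := fun j : Fin (S + n) => window M K i ((1 + (j : ℕ) * d : ℕ) : ZMod M))
  rw [Finset.card_univ, Fintype.card_fin] at hsplit
  omega
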